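/- arXiv:1503.02436 — 3 statements merged into one kernel-verified Lean document; each statement's English description precedes it below -/
import Mathlib

section
/- Let O be a profinite group. Then every discrete Q[O]-module is both injective and projective in the abelian category of discrete Q[O]-modules. -/
universe u

/-- A discrete `ℚ[G]`-module over a topological group `G`: a `ℚ`-vector space with
a `ℚ`-linear `G`-action in which every element has open stabilizer. -/
structure DiscGMod (G : Type u) [Group G] [TopologicalSpace G] : Type (u + 1) where
  carrier : Type u
  [acg : AddCommGroup carrier]
  [mod : Module ℚ carrier]
  [act : DistribMulAction G carrier]
  [cmm : SMulCommClass G ℚ carrier]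
  discrete : ∀ m : carrier, IsOpen ((MulAction.stabilizer G m : Subgroup G) : Set G)

attribute [instance] DiscGMod.acg DiscGMod.mod DiscGMod.act DiscGMod.cmm

/-- A morphism of discrete `ℚ[G]`-modules is a `G`-equivariant `ℚ`-linear map. -/
def DiscGMod.Equivariant {G : Type u} [Group G] [TopologicalSpace G]
    {A B : DiscGMod G} (f : A.carrier →ₗ[ℚ] B.carrier) : Prop :=
  ∀ (g : G) (a : A.carrier), f (g • a) = g • f a

/-- `M` is injective in the category of discrete `ℚ[G]`-modules: morphisms into `M`
extend along monomorphisms. -/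
def DiscGMod.IsInjectiveObj {G : Type u} [Group G] [TopologicalSpace G]
    (M : DiscGMod G) : Prop :=
  ∀ (A B : DiscGMod G) (ι : A.carrier →ₗ[ℚ] B.carrier),
    DiscGMod.Equivariant ι → Function.Injective ι →
    ∀ φ : A.carrier →ₗ[ℚ] M.carrier, DiscGMod.Equivariant φ →
    ∃ ψ : B.carrier →ₗ[ℚ] M.carrier, DiscGMod.Equivariant ψ ∧ ψ.comp ι = φ

/-- `M` is projective in the category of discrete `ℚ[G]`-modules: morphisms out of
`M` lift along epimorphisms. -/
def DiscGMod.IsProjectiveObj {G : Type u} [Group G] [TopologicalSpace G]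
    (M : DiscGMod G) : Prop :=
  ∀ (A B : DiscGMod G) (π : B.carrier →ₗ[ℚ] A.carrier),
    DiscGMod.Equivariant π → Function.Surjective π →
    ∀ φ : M.carrier →ₗ[ℚ] A.carrier, DiscGMod.Equivariant φ →
    ∃ ψ : M.carrier →ₗ[ℚ] B.carrier, DiscGMod.Equivariant ψ ∧ π.comp ψ = φ

set_option linter.unusedSectionVars false



open Finset in
lemma avg_sum_comp {A B : Type*} [Group A] [Group B] [Fintype A] [Fintype B]
    {Y : Type*} [AddCommGroup Y] [Module ℚ Y]
    (p : A →* B) (hp : Function.Surjective p) (F : B → Y) :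
    (Fintype.card A : ℚ)⁻¹ • ∑ a : A, F (p a) = (Fintype.card B : ℚ)⁻¹ • ∑ b : B, F b := by
  classical
  set k := #{a : A | p a = (1 : B)} with hk
  have hfib : ∀ b : B, #{a : A | p a = b} = k := fun b =>
    MonoidHom.card_fiber_eq_of_mem_range p (hp b) ⟨1, map_one p⟩
  have hone : 0 < k := by
    rw [hk, Finset.card_pos]
    exact ⟨1, by simp⟩
  have hcard : Fintype.card A = Fintype.card B * k := by
    rw [← Finset.card_univ, Finset.card_eq_sum_card_fiberwise (f := fun a => p a)
      (t := Finset.univ) (fun x _ => Finset.mem_univ _)]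
    simp only [hfib]
    simp [Finset.sum_const, mul_comm]
  have hsum : ∑ a : A, F (p a) = k • ∑ b : B, F b := by
    rw [← Finset.sum_fiberwise_of_maps_to' (g := fun a => p a) (t := Finset.univ)
      (fun x _ => Finset.mem_univ _) F]
    rw [Finset.smul_sum]
    refine Finset.sum_congr rfl fun b _ => ?_
    rw [Finset.sum_const, hfib b]
  rw [hsum, ← Nat.cast_smul_eq_nsmul ℚ, smul_smul]
  congr 1
  have hB : (Fintype.card B : ℚ) ≠ 0 := Nat.cast_ne_zero.mpr Fintype.card_ne_zero
  have hkq : (k : ℚ) ≠ 0 := Nat.cast_ne_zero.mpr hone.ne'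
  rw [hcard]
  push_cast
  field_simp


section Avg


variable {G : Type u} [Group G] [TopologicalSpace G] [IsTopologicalGroup G] [CompactSpace G]
variable {X Y : DiscGMod G} (f : X.carrier →ₗ[ℚ] Y.carrier)

/-- `V` is adapted to `b`: it fixes `b` and all values `f (g • b)`. -/
def GoodFor (V : Subgroup G) (b : X.carrier) : Prop :=
  (∀ v ∈ V, v • b = b) ∧ ∀ g : G, ∀ v ∈ V, v • f (g • b) = f (g • b)

lemma GoodFor.mono {V W : Subgroup G} (h : W ≤ V) {b : X.carrier}
    (hb : GoodFor f V b) : GoodFor f W b :=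
  ⟨fun v hv => hb.1 v (h hv), fun g v hv => hb.2 g v (h hv)⟩

/-- The function on the quotient whose average we take. -/
noncomputable def avgQ (V : Subgroup G) [V.Normal] (b : X.carrier)
    (hb : GoodFor f V b) : G ⧸ V → Y.carrier := fun q =>
  Quotient.liftOn' q (fun g => g • f (g⁻¹ • b)) (by
    intro a c hac
    rw [QuotientGroup.leftRel_apply] at hac
    set v : G := a⁻¹ * c with hv
    have hc : c = a * v := by rw [hv]; group
    have h1 : c⁻¹ • b = a⁻¹ • b := by
      have : (a * v⁻¹ * a⁻¹) • b = b := hb.1 _ (Subgroup.Normal.conj_mem ‹V.Normal› _ (inv_mem hac) a)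
      calc c⁻¹ • b = (a⁻¹ * (a * v⁻¹ * a⁻¹)) • b := by rw [hc]; congr 1; group
        _ = a⁻¹ • ((a * v⁻¹ * a⁻¹) • b) := by rw [mul_smul]
        _ = a⁻¹ • b := by rw [this]
    have h2 : v • f (a⁻¹ • b) = f (a⁻¹ • b) := hb.2 a⁻¹ v hac
    calc a • f (a⁻¹ • b) = a • (v • f (a⁻¹ • b)) := by rw [h2]
      _ = (a * v) • f (a⁻¹ • b) := (mul_smul _ _ _).symm
      _ = c • f (a⁻¹ • b) := by rw [← hc]
      _ = c • f (c⁻¹ • b) := by rw [h1])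

lemma avgQ_mk (V : Subgroup G) [V.Normal] (b : X.carrier) (hb : GoodFor f V b) (g : G) :
    avgQ f V b hb (QuotientGroup.mk g) = g • f (g⁻¹ • b) := rfl

/-- The average of `f` over `G ⧸ V` at `b`. -/
noncomputable def avgAt (V : Subgroup G) [V.Normal] (b : X.carrier)
    (hb : GoodFor f V b) : Y.carrier :=
  (Nat.card (G ⧸ V) : ℚ)⁻¹ • ∑ᶠ q : G ⧸ V, avgQ f V b hb q

lemma avgAt_eq_sum (V : Subgroup G) [V.Normal] [Fintype (G ⧸ V)] (b : X.carrier)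
    (hb : GoodFor f V b) :
    avgAt f V b hb = (Fintype.card (G ⧸ V) : ℚ)⁻¹ • ∑ q : G ⧸ V, avgQ f V b hb q := by
  rw [avgAt, finsum_eq_sum_of_fintype, Nat.card_eq_fintype_card]

lemma avgAt_mono (V W : Subgroup G) [V.Normal] [W.Normal] [Finite (G ⧸ V)] [Finite (G ⧸ W)]
    (hWV : W ≤ V) (b : X.carrier) (hbV : GoodFor f V b) (hbW : GoodFor f W b) :
    avgAt f W b hbW = avgAt f V b hbV := by
  letI : Fintype (G ⧸ V) := Fintype.ofFinite _
  letI : Fintype (G ⧸ W) := Fintype.ofFinite _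
  let p : G ⧸ W →* G ⧸ V := QuotientGroup.map W V (MonoidHom.id G) (by simpa using hWV)
  have hp : Function.Surjective p := by
    intro q
    induction q using Quotient.inductionOn' with
    | h g => exact ⟨QuotientGroup.mk g, rfl⟩
  have hcomp : ∀ q, avgQ f W b hbW q = avgQ f V b hbV (p q) := by
    intro q
    induction q using Quotient.inductionOn' with
    | h g => rfl
  rw [avgAt_eq_sum, avgAt_eq_sum]
  rw [Finset.sum_congr rfl fun q _ => hcomp q]
  exact avg_sum_comp p hp (avgQ f V b hbV)

lemma GoodFor.smul {V : Subgroup G} [V.Normal] {b : X.carrier} (hb : GoodFor f V b) (h : G) :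
    GoodFor f V (h • b) := by
  constructor
  · intro v hv
    have : (h⁻¹ * v * h) • b = b := hb.1 _ (by
      simpa using Subgroup.Normal.conj_mem ‹V.Normal› v hv h⁻¹)
    calc v • h • b = h • ((h⁻¹ * v * h) • b) := by simp [mul_smul]
      _ = h • b := by rw [this]
  · intro g v hv
    have := hb.2 (g * h) v hv
    simpa [mul_smul] using this

lemma GoodFor.add {V : Subgroup G} {b b' : X.carrier}
    (hb : GoodFor f V b) (hb' : GoodFor f V b') : GoodFor f V (b + b') := by
  constructor
  · intro v hv; rw [smul_add, hb.1 v hv, hb'.1 v hv]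
  · intro g v hv
    rw [smul_add, map_add, smul_add, hb.2 g v hv, hb'.2 g v hv]

lemma GoodFor.qsmul {V : Subgroup G} {b : X.carrier}
    (hb : GoodFor f V b) (c : ℚ) : GoodFor f V (c • b) := by
  constructor
  · intro v hv; rw [smul_comm, hb.1 v hv]
  · intro g v hv
    rw [smul_comm, map_smul, smul_comm, hb.2 g v hv]

lemma avgAt_smul (V : Subgroup G) [V.Normal] [Finite (G ⧸ V)] (b : X.carrier)
    (hb : GoodFor f V b) (h : G) (hb' : GoodFor f V (h • b)) :
    avgAt f V (h • b) hb' = h • avgAt f V b hb := by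
  letI : Fintype (G ⧸ V) := Fintype.ofFinite _
  rw [avgAt_eq_sum, avgAt_eq_sum,
    smul_comm h ((Fintype.card (G ⧸ V) : ℚ)⁻¹) (∑ q : G ⧸ V, avgQ f V b hb q)]
  conv_rhs => rw [Finset.smul_sum]
  congr 1
  refine (Fintype.sum_equiv (Equiv.mulLeft (QuotientGroup.mk h : G ⧸ V))
    (fun q => h • avgQ f V b hb q) (avgQ f V (h • b) hb') ?_).symm
  intro q
  induction q using Quotient.inductionOn' with
  | h g =>
    have hmk : (Equiv.mulLeft (QuotientGroup.mk h : G ⧸ V)) (Quotient.mk'' g)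
        = QuotientGroup.mk (h * g) := rfl
    rw [hmk]
    show h • (g • f (g⁻¹ • b)) = (h * g) • f ((h * g)⁻¹ • (h • b))
    have : (h * g)⁻¹ • (h • b) = g⁻¹ • b := by
      rw [← mul_smul]; congr 1; group
    rw [this, mul_smul]

lemma avgAt_add (V : Subgroup G) [V.Normal] [Finite (G ⧸ V)] (b b' : X.carrier)
    (hb : GoodFor f V b) (hb' : GoodFor f V b') (hbb : GoodFor f V (b + b')) :
    avgAt f V (b + b') hbb = avgAt f V b hb + avgAt f V b' hb' := by
  letI : Fintype (G ⧸ V) := Fintype.ofFinite _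
  rw [avgAt_eq_sum, avgAt_eq_sum, avgAt_eq_sum, ← smul_add, ← Finset.sum_add_distrib]
  congr 1
  refine Finset.sum_congr rfl fun q _ => ?_
  induction q using Quotient.inductionOn' with
  | h g =>
    show g • f (g⁻¹ • (b + b')) = g • f (g⁻¹ • b) + g • f (g⁻¹ • b')
    rw [smul_add, map_add, smul_add]

lemma avgAt_qsmul (V : Subgroup G) [V.Normal] [Finite (G ⧸ V)] (b : X.carrier)
    (hb : GoodFor f V b) (c : ℚ) (hb' : GoodFor f V (c • b)) :
    avgAt f V (c • b) hb' = c • avgAt f V b hb := by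
  letI : Fintype (G ⧸ V) := Fintype.ofFinite _
  rw [avgAt_eq_sum, avgAt_eq_sum,
    smul_comm c ((Fintype.card (G ⧸ V) : ℚ)⁻¹) (∑ q : G ⧸ V, avgQ f V b hb q)]
  conv_rhs => rw [Finset.smul_sum]
  congr 1
  refine Finset.sum_congr rfl fun q _ => ?_
  induction q using Quotient.inductionOn' with
  | h g =>
    show g • f (g⁻¹ • (c • b)) = c • (g • f (g⁻¹ • b))
    rw [smul_comm g⁻¹ c b, map_smul, smul_comm]

lemma avgAt_const (V : Subgroup G) [V.Normal] [Finite (G ⧸ V)] (b : X.carrier)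
    (hb : GoodFor f V b) (c : Y.carrier) (h : ∀ g : G, g • f (g⁻¹ • b) = c) :
    avgAt f V b hb = c := by
  letI : Fintype (G ⧸ V) := Fintype.ofFinite _
  rw [avgAt_eq_sum]
  have hq : ∀ q : G ⧸ V, avgQ f V b hb q = c := by
    intro q
    induction q using Quotient.inductionOn' with
    | h g => exact h g
  rw [Finset.sum_congr rfl fun q _ => hq q, Finset.sum_const, ← Nat.cast_smul_eq_nsmul ℚ,
    smul_smul, Finset.card_univ]
  have hne : (Fintype.card (G ⧸ V) : ℚ) ≠ 0 := Nat.cast_ne_zero.mpr Fintype.card_ne_zero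
  rw [inv_mul_cancel₀ hne, one_smul]

lemma exists_goodFor (b : X.carrier) :
    ∃ V : OpenNormalSubgroup G, GoodFor f (V : Subgroup G) b := by
  have hq : Finite (G ⧸ MulAction.stabilizer G b) :=
    Subgroup.quotient_finite_of_isOpen _ (X.discrete b)
  have hfin : Finite (MulAction.orbit G b) :=
    Finite.of_equiv _ (MulAction.orbitEquivQuotientStabilizer G b).symm
  let K : Subgroup G := MulAction.stabilizer G b ⊓
    ⨅ x : MulAction.orbit G b, MulAction.stabilizer G (f x)
  have hK : IsOpen (K : Set G) := by
    have hcoe : (K : Set G) = (MulAction.stabilizer G b : Set G) ∩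
        ⋂ x : MulAction.orbit G b, (MulAction.stabilizer G (f x) : Set G) := by
      simp [K, Subgroup.coe_inf, Subgroup.coe_iInf]
    rw [hcoe]
    exact (X.discrete b).inter (isOpen_iInter_of_finite fun x => Y.discrete _)
  obtain ⟨V, hV⟩ := IsTopologicalGroup.exist_openNormalSubgroup_sub_clopen_nhds_of_one
    ⟨Subgroup.isClosed_of_isOpen K hK, hK⟩ (one_mem K)
  have hVK : (V : Subgroup G) ≤ K := hV
  refine ⟨V, fun v hv => (Subgroup.mem_inf.mp (hVK hv)).1, fun g v hv => ?_⟩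
  have hmem : v ∈ MulAction.stabilizer G (f (⟨g • b, MulAction.mem_orbit b g⟩ :
      MulAction.orbit G b)) :=
    Subgroup.mem_iInf.mp (Subgroup.mem_inf.mp (hVK hv)).2 ⟨g • b, MulAction.mem_orbit b g⟩
  exact hmem

noncomputable def goodSub (b : X.carrier) : OpenNormalSubgroup G := (exists_goodFor f b).choose

lemma goodSub_spec (b : X.carrier) :
    GoodFor f ((goodSub f b : OpenNormalSubgroup G) : Subgroup G) b :=
  (exists_goodFor f b).choose_spec

instance (V : OpenNormalSubgroup G) : Finite (G ⧸ (V : Subgroup G)) :=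
  Subgroup.quotient_finite_of_isOpen _ V.toOpenSubgroup.isOpen

/-- The equivariant average of `f`. -/
noncomputable def avgF (b : X.carrier) : Y.carrier :=
  avgAt f ((goodSub f b : OpenNormalSubgroup G) : Subgroup G) b (goodSub_spec f b)

lemma avgF_eq (b : X.carrier) (V : Subgroup G) [V.Normal] [Finite (G ⧸ V)]
    (hVo : IsOpen (V : Set G)) (hb : GoodFor f V b) : avgF f b = avgAt f V b hb := by
  set V₀ : Subgroup G := ((goodSub f b : OpenNormalSubgroup G) : Subgroup G) with hV₀
  have hWopen : IsOpen ((V ⊓ V₀ : Subgroup G) : Set G) := by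
    rw [Subgroup.coe_inf]
    exact hVo.inter (goodSub f b).toOpenSubgroup.isOpen
  haveI : Finite (G ⧸ (V ⊓ V₀ : Subgroup G)) :=
    Subgroup.quotient_finite_of_isOpen _ hWopen
  have hbW : GoodFor f (V ⊓ V₀) b := hb.mono f inf_le_left
  have h1 : avgF f b = avgAt f V₀ b (goodSub_spec f b) := rfl
  rw [h1, ← avgAt_mono f V₀ (V ⊓ V₀) inf_le_right b (goodSub_spec f b) hbW,
    avgAt_mono f V (V ⊓ V₀) inf_le_left b hb hbW]

lemma avgF_add (b b' : X.carrier) : avgF f (b + b') = avgF f b + avgF f b' := by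
  obtain ⟨V₁, h1⟩ := exists_goodFor f b
  obtain ⟨V₂, h2⟩ := exists_goodFor f b'
  set W : Subgroup G := (V₁ : Subgroup G) ⊓ (V₂ : Subgroup G) with hW
  have hWo : IsOpen (W : Set G) := by
    rw [hW, Subgroup.coe_inf]
    exact V₁.toOpenSubgroup.isOpen.inter V₂.toOpenSubgroup.isOpen
  haveI : Finite (G ⧸ W) := Subgroup.quotient_finite_of_isOpen _ hWo
  have hb : GoodFor f W b := h1.mono f inf_le_left
  have hb' : GoodFor f W b' := h2.mono f inf_le_right
  rw [avgF_eq f b W hWo hb, avgF_eq f b' W hWo hb',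
    avgF_eq f (b + b') W hWo (hb.add f hb'), avgAt_add f W b b' hb hb']

lemma avgF_qsmul (c : ℚ) (b : X.carrier) : avgF f (c • b) = c • avgF f b := by
  obtain ⟨V, hV⟩ := exists_goodFor f b
  have hVo : IsOpen ((V : Subgroup G) : Set G) := V.toOpenSubgroup.isOpen
  rw [avgF_eq f b (V : Subgroup G) hVo hV, avgF_eq f (c • b) (V : Subgroup G) hVo (hV.qsmul f c),
    avgAt_qsmul f (V : Subgroup G) b hV c]

lemma avgF_smul (h : G) (b : X.carrier) : avgF f (h • b) = h • avgF f b := by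
  obtain ⟨V, hV⟩ := exists_goodFor f b
  have hVo : IsOpen ((V : Subgroup G) : Set G) := V.toOpenSubgroup.isOpen
  rw [avgF_eq f b (V : Subgroup G) hVo hV, avgF_eq f (h • b) (V : Subgroup G) hVo (hV.smul f h),
    avgAt_smul f (V : Subgroup G) b hV h]

lemma avgF_const (b : X.carrier) (c : Y.carrier) (h : ∀ g : G, g • f (g⁻¹ • b) = c) :
    avgF f b = c := by
  obtain ⟨V, hV⟩ := exists_goodFor f b
  have hVo : IsOpen ((V : Subgroup G) : Set G) := V.toOpenSubgroup.isOpen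
  rw [avgF_eq f b (V : Subgroup G) hVo hV]
  exact avgAt_const f (V : Subgroup G) b hV c h

lemma avgF_naturality {Z : DiscGMod G} (p : Y.carrier →ₗ[ℚ] Z.carrier)
    (hp : ∀ (g : G) (y : Y.carrier), p (g • y) = g • p y) (b : X.carrier) :
    p (avgF f b) = avgF (p.comp f) b := by
  obtain ⟨V, hV⟩ := exists_goodFor f b
  have hVo : IsOpen ((V : Subgroup G) : Set G) := V.toOpenSubgroup.isOpen
  have hV' : GoodFor (p.comp f) (V : Subgroup G) b := by
    refine ⟨hV.1, fun g v hv => ?_⟩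
    simp only [LinearMap.comp_apply]
    rw [← hp, hV.2 g v hv]
  letI : Fintype (G ⧸ (V : Subgroup G)) := Fintype.ofFinite _
  rw [avgF_eq f b (V : Subgroup G) hVo hV, avgF_eq (p.comp f) b (V : Subgroup G) hVo hV',
    avgAt_eq_sum, avgAt_eq_sum, map_smul, map_sum]
  congr 1
  refine Finset.sum_congr rfl fun q _ => ?_
  induction q using Quotient.inductionOn' with
  | h g =>
    show p (g • f (g⁻¹ • b)) = g • (p.comp f) (g⁻¹ • b)
    rw [hp]
    rfl

/-- The equivariant average, as a linear map. -/
noncomputable def avgL : X.carrier →ₗ[ℚ] Y.carrier where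
  toFun := avgF f
  map_add' := avgF_add f
  map_smul' := avgF_qsmul f

end Avg

/-- Let `O` be a profinite group.  Every discrete `ℚ[O]`-module is
both injective and projective in the category of discrete `ℚ[O]`-modules. -/
theorem profinite_discrete_modules_inj_proj (O : Type u) [Group O]
    [TopologicalSpace O] [IsTopologicalGroup O] [CompactSpace O]
    [TotallyDisconnectedSpace O] [T2Space O] (M : DiscGMod O) :
    M.IsInjectiveObj ∧ M.IsProjectiveObj := by
  constructor
  · intro A B ι hι hinj φ hφ
    obtain ⟨g, hg⟩ := LinearMap.exists_leftInverse_of_injective ι (LinearMap.ker_eq_bot.mpr hinj)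
    set ψ₀ : B.carrier →ₗ[ℚ] M.carrier := φ.comp g with hψ₀
    have hcomp : ψ₀.comp ι = φ := by
      rw [hψ₀, LinearMap.comp_assoc, hg, LinearMap.comp_id]
    refine ⟨avgL ψ₀, fun h b => avgF_smul ψ₀ h b, ?_⟩
    ext a
    show avgF ψ₀ (ι a) = φ a
    refine avgF_const ψ₀ (ι a) (φ a) fun gg => ?_
    have h1 : gg⁻¹ • ι a = ι (gg⁻¹ • a) := (hι gg⁻¹ a).symm
    have h2 : ψ₀ (ι (gg⁻¹ • a)) = φ (gg⁻¹ • a) := LinearMap.congr_fun hcomp (gg⁻¹ • a)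
    rw [h1, h2, hφ gg⁻¹ a, smul_inv_smul]
  · intro A B π hπ hsurj φ hφ
    obtain ⟨s, hs⟩ := LinearMap.exists_rightInverse_of_surjective π
      (LinearMap.range_eq_top.mpr hsurj)
    set ψ₀ : M.carrier →ₗ[ℚ] B.carrier := s.comp φ with hψ₀
    have hcomp : π.comp ψ₀ = φ := by
      rw [hψ₀, ← LinearMap.comp_assoc, hs, LinearMap.id_comp]
    refine ⟨avgL ψ₀, fun h m => avgF_smul ψ₀ h m, ?_⟩
    ext m
    show π (avgF ψ₀ m) = φ m
    rw [avgF_naturality ψ₀ π hπ m, hcomp]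
    refine avgF_const φ m (φ m) fun gg => ?_
    rw [hφ gg⁻¹ m, smul_inv_smul]
end

section
/- Let O be a profinite group and M a discrete Q[O]-module. Then the canonical map φ : M^O → M_O from the invariants to the coinvariants, sending m to 1 ⊗ m, is an isomorphism of Q-vector spaces, where M_O = Q ⊗_{Q[O]} M. -/
section Aux

variable {O : Type*} [Group O] {M : Type*} [AddCommGroup M] [Module ℚ M]
  [DistribMulAction O M] [SMulCommClass O ℚ M]

/-- If `a` and `b` lie in the same left coset of `H` and `H` stabilizes `x`,
then `a • x = b • x`. -/
lemma auxCosetSmul {H : Subgroup O} {x : M} (hH : H ≤ MulAction.stabilizer O x)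
    {a b : O} (h : (a : O ⧸ H) = b) : a • x = b • x := by
  have hmem : a⁻¹ * b ∈ H := QuotientGroup.eq.mp h
  have hx : (a⁻¹ * b) • x = x := hH hmem
  have : b • x = a • ((a⁻¹ * b) • x) := by rw [smul_smul, mul_inv_cancel_left]
  rw [this, hx]

/-- Averaging over the cosets of a finite-index subgroup, as a `ℚ`-linear map. -/
noncomputable def avgHom (H : Subgroup O) [Fintype (O ⧸ H)] : M →ₗ[ℚ] M where
  toFun x := (Fintype.card (O ⧸ H) : ℚ)⁻¹ • ∑ q : O ⧸ H, q.out • x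
  map_add' x y := by simp only [smul_add, Finset.sum_add_distrib]
  map_smul' c x := by
    simp only [RingHom.id_apply]
    rw [Finset.sum_congr rfl fun (q : O ⧸ H) _ => smul_comm q.out c x,
      ← Finset.smul_sum, smul_comm _ c]

lemma avgHom_apply (H : Subgroup O) [Fintype (O ⧸ H)] (x : M) :
    avgHom H x = (Fintype.card (O ⧸ H) : ℚ)⁻¹ • ∑ q : O ⧸ H, q.out • x := rfl

lemma card_cast_ne_zero (H : Subgroup O) [Fintype (O ⧸ H)] :
    (Fintype.card (O ⧸ H) : ℚ) ≠ 0 :=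
  Nat.cast_ne_zero.mpr Fintype.card_ne_zero

/-- Averaging fixes invariant elements. -/
lemma avgHom_of_invariant (H : Subgroup O) [Fintype (O ⧸ H)] {m : M}
    (hm : ∀ g : O, g • m = m) : avgHom H m = m := by
  rw [avgHom_apply]
  rw [Finset.sum_congr rfl fun q _ => hm q.out]
  rw [Finset.sum_const, Finset.card_univ, ← Nat.cast_smul_eq_nsmul ℚ, smul_smul,
    inv_mul_cancel₀ (card_cast_ne_zero H), one_smul]

/-- The average is invariant, provided `H` stabilizes `m`. -/
lemma smul_avgHom (H : Subgroup O) [Fintype (O ⧸ H)] {m : M}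
    (hH : H ≤ MulAction.stabilizer O m) (g : O) :
    g • (avgHom H m : M) = avgHom H m := by
  rw [avgHom_apply, smul_comm g, Finset.smul_sum]
  congr 1
  calc ∑ q : O ⧸ H, g • q.out • m
      = ∑ q : O ⧸ H, ((g • q : O ⧸ H).out) • m := by
        refine Finset.sum_congr rfl fun q _ => ?_
        rw [smul_smul]
        refine auxCosetSmul hH ?_
        rw [QuotientGroup.out_eq']
        exact MulAction.Quotient.coe_smul_out H g q
    _ = ∑ q : O ⧸ H, q.out • m :=
        Equiv.sum_comp (MulAction.toPerm g) (fun q : O ⧸ H => q.out • m)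

/-- The average differs from the original element by an element of the span of
`g • m' - m'`. -/
lemma avgHom_sub_mem (H : Subgroup O) [Fintype (O ⧸ H)] (m : M) :
    avgHom H m - m ∈ Submodule.span ℚ {x : M | ∃ (g : O) (m' : M), x = g • m' - m'} := by
  have key : avgHom H m - m
      = (Fintype.card (O ⧸ H) : ℚ)⁻¹ • ∑ q : O ⧸ H, (q.out • m - m) := by
    rw [Finset.sum_sub_distrib, smul_sub, avgHom_apply, Finset.sum_const, Finset.card_univ,
      ← Nat.cast_smul_eq_nsmul ℚ, smul_smul, inv_mul_cancel₀ (card_cast_ne_zero H), one_smul]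
  rw [key]
  exact Submodule.smul_mem _ _ (Submodule.sum_mem _ fun q _ =>
    Submodule.subset_span ⟨q.out, m, rfl⟩)

/-- If `H` is normal and stabilizes `m'`, the average kills `g • m' - m'`. -/
lemma avgHom_generator (H : Subgroup O) [Fintype (O ⧸ H)] [H.Normal] {m' : M}
    (hH : H ≤ MulAction.stabilizer O m') (g : O) :
    avgHom H (g • m' - m') = (0 : M) := by
  rw [map_sub, sub_eq_zero, avgHom_apply, avgHom_apply]
  congr 1
  calc ∑ q : O ⧸ H, q.out • g • m'
      = ∑ q : O ⧸ H, ((q * (g : O ⧸ H)).out) • m' := by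
        refine Finset.sum_congr rfl fun q _ => ?_
        rw [smul_smul]
        refine auxCosetSmul hH ?_
        rw [QuotientGroup.out_eq']
        show ((q.out * g : O) : O ⧸ H) = q * (g : O ⧸ H)
        rw [QuotientGroup.mk_mul, QuotientGroup.out_eq']
    _ = ∑ q : O ⧸ H, q.out • m' :=
        Equiv.sum_comp (Equiv.mulRight (g : O ⧸ H)) (fun q : O ⧸ H => q.out • m')

end Aux

/-- Let `O` be a profinite group and `M` a discrete `ℚ[O]`-module.
The canonical map `M^O → M_O` from invariants to coinvariants, `m ↦ 1 ⊗ m`, is an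
isomorphism of `ℚ`-vector spaces (i.e. it is bijective). -/
theorem invariants_equiv_coinvariants (O : Type*) [Group O] [TopologicalSpace O]
    [IsTopologicalGroup O] [CompactSpace O] [TotallyDisconnectedSpace O] [T2Space O]
    (M : Type*) [AddCommGroup M] [Module ℚ M] [DistribMulAction O M]
    [SMulCommClass O ℚ M]
    (hdisc : ∀ m : M, IsOpen ((MulAction.stabilizer O m : Subgroup O) : Set O)) :
    Function.Bijective
      (fun m : {m : M // ∀ g : O, g • m = m} =>
        (Submodule.Quotient.mk m.1 :
          M ⧸ Submodule.span ℚ {x : M | ∃ (g : O) (m' : M), x = g • m' - m'})) := by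
  set S : Set M := {x : M | ∃ (g : O) (m' : M), x = g • m' - m'} with hS
  set N : Submodule ℚ M := Submodule.span ℚ S with hN
  -- every stabilizer has finite quotient
  have hfin : ∀ m : M, Finite (O ⧸ MulAction.stabilizer O m) := fun m =>
    (MulAction.stabilizer O m).quotient_finite_of_isOpen (hdisc m)
  constructor
  · -- injectivity
    rintro ⟨m₁, h₁⟩ ⟨m₂, h₂⟩ h
    simp only [Subtype.mk.injEq]
    have hmem : m₁ - m₂ ∈ N := (Submodule.Quotient.eq N).mp h
    have hinv : ∀ g : O, g • (m₁ - m₂) = m₁ - m₂ := fun g => by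
      rw [smul_sub, h₁ g, h₂ g]
    -- key: an invariant element of N is zero
    rw [← sub_eq_zero]
    set m := m₁ - m₂ with hm
    clear_value m
    obtain ⟨c, hsupp, hsum⟩ := Submodule.mem_span_set.mp hmem
    have hx : ∀ x : M, ∃ g' : O, ∃ mm : M, x ∈ c.support → x = g' • mm - mm := by
      intro x
      by_cases hxs : x ∈ c.support
      · obtain ⟨g', mm, e⟩ := hsupp hxs
        exact ⟨g', mm, fun _ => e⟩
      · exact ⟨1, 0, fun h' => absurd h' hxs⟩
    choose gg mm hgm using hx
    set K : Subgroup O := ⨅ x ∈ c.support, MulAction.stabilizer O (mm x) with hK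
    haveI : K.FiniteIndex := by
      refine Subgroup.finiteIndex_iInf' _ fun x _ => ?_
      haveI := hfin (mm x)
      exact Subgroup.finiteIndex_of_finite_quotient (H := _)
    set H : Subgroup O := K.normalCore with hH
    haveI : H.Normal := Subgroup.normalCore_normal K
    haveI : H.FiniteIndex := Subgroup.finiteIndex_normalCore K
    haveI : Finite (O ⧸ H) := Subgroup.finite_quotient_of_finiteIndex (H := H)
    haveI : Fintype (O ⧸ H) := Fintype.ofFinite _
    have hHle : ∀ x ∈ c.support, H ≤ MulAction.stabilizer O (mm x) := by
      intro x hxs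
      exact le_trans (Subgroup.normalCore_le K)
        (le_trans (iInf_le _ x) (iInf_le _ hxs))
    calc m = avgHom H m := (avgHom_of_invariant H hinv).symm
      _ = avgHom H (c.sum fun a b => b • a) := by rw [hsum]
      _ = c.sum fun a b => b • avgHom H a := by
          rw [map_finsuppSum]
          exact Finsupp.sum_congr fun x _ => map_smul (avgHom H) _ _
      _ = 0 := by
          rw [Finsupp.sum]
          refine Finset.sum_eq_zero fun x hxs => ?_
          rw [hgm x hxs, avgHom_generator H (hHle x hxs) (gg x), smul_zero]
  · -- surjectivity
    intro y
    obtain ⟨m, rfl⟩ := Submodule.Quotient.mk_surjective N y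
    haveI := hfin m
    haveI : Fintype (O ⧸ MulAction.stabilizer O m) := Fintype.ofFinite _
    refine ⟨⟨avgHom (MulAction.stabilizer O m) m,
      smul_avgHom (MulAction.stabilizer O m) le_rfl⟩, ?_⟩
    exact (Submodule.Quotient.eq N).mpr (avgHom_sub_mem _ m)
end

section
/- A t.d.l.c. group G is compactly generated if and only if for some (equivalently, every) compact open subgroup O of G, the augmentation ideal ker(ε : Q[G/O] → Q) is a finitely generated discrete Q[G]-module; equivalently, G is of type FP₁ over Q. -/
universe u

variable (G : Type u) [Group G] [TopologicalSpace G]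

/-- `G` is compactly generated. -/
def CompactlyGenerated' : Prop :=
  ∃ K : Set G, IsCompact K ∧ Subgroup.closure K = ⊤

/-- The augmentation `ε : ℚ[G/O] → ℚ`. -/
noncomputable def augmentation (O : Subgroup G) : ((G ⧸ O) →₀ ℚ) →ₗ[ℚ] ℚ :=
  Finsupp.linearCombination ℚ (fun _ : G ⧸ O => (1 : ℚ))

/-- The kernel of the augmentation `ℚ[G/O] → ℚ` is a finitely generated discrete
`ℚ[G]`-module: finitely many elements of the kernel generate it over `ℚ[G]`,
i.e. the `ℚ`-span of their `G`-translates is the whole kernel. -/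
noncomputable def AugKerFG (O : Subgroup G) : Prop :=
  ∃ s : Finset ((G ⧸ O) →₀ ℚ), (∀ v ∈ s, v ∈ LinearMap.ker (augmentation G O)) ∧
    Submodule.span ℚ
        {x : (G ⧸ O) →₀ ℚ | ∃ (g : G), ∃ v ∈ s,
          x = Finsupp.mapDomain (fun y : G ⧸ O => g • y) v} =
      LinearMap.ker (augmentation G O)

/-- `G` is of type `FP₁` over `ℚ`: the trivial discrete `ℚ[G]`-module `ℚ` admits a
partial projective resolution `P₁ → P₀ → ℚ → 0` by finitely generated projective
discrete `ℚ[G]`-modules; equivalently, by finite coproducts of permutation modules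
`ℚ[G/O]` with `O` compact open. -/
noncomputable def IsTypeFPOne : Prop :=
  ∃ (n m : ℕ) (A : Fin n → Subgroup G) (B : Fin m → Subgroup G),
    (∀ i, IsOpen ((A i : Set G)) ∧ IsCompact ((A i : Set G))) ∧
    (∀ j, IsOpen ((B j : Set G)) ∧ IsCompact ((B j : Set G))) ∧
    ∃ (d : ((Σ j, G ⧸ B j) →₀ ℚ) →ₗ[ℚ] ((Σ i, G ⧸ A i) →₀ ℚ))
      (e : ((Σ i, G ⧸ A i) →₀ ℚ) →ₗ[ℚ] ℚ),
      (∀ (g : G) (f : (Σ j, G ⧸ B j) →₀ ℚ),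
        d (Finsupp.mapDomain (fun x : Σ j, G ⧸ B j =>
            (⟨x.1, g • x.2⟩ : Σ j, G ⧸ B j)) f) =
          Finsupp.mapDomain (fun x : Σ i, G ⧸ A i =>
            (⟨x.1, g • x.2⟩ : Σ i, G ⧸ A i)) (d f)) ∧
      (∀ (g : G) (f : (Σ i, G ⧸ A i) →₀ ℚ),
        e (Finsupp.mapDomain (fun x : Σ i, G ⧸ A i =>
            (⟨x.1, g • x.2⟩ : Σ i, G ⧸ A i)) f) = e f) ∧
      Function.Surjective e ∧ LinearMap.range d = LinearMap.ker e


namespace Aux13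

open Finsupp

variable {G : Type*} [Group G]

section act
variable {α : Type*} [MulAction G α]

/-- translation of a finitely supported function -/
noncomputable def tr (g : G) : (α →₀ ℚ) →ₗ[ℚ] (α →₀ ℚ) :=
  Finsupp.lmapDomain ℚ ℚ (fun y : α => g • y)

@[simp] lemma tr_apply (g : G) (v : α →₀ ℚ) :
    tr g v = Finsupp.mapDomain (fun y : α => g • y) v := rfl

@[simp] lemma tr_single (g : G) (x : α) (c : ℚ) :
    tr g (single x c) = single (g • x) c := by
  simp [tr, Finsupp.mapDomain_single]

lemma tr_tr (g h : G) (v : α →₀ ℚ) : tr g (tr h v) = tr (g * h) v := by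
  simp only [tr, lmapDomain_apply]
  rw [← Finsupp.mapDomain_comp]
  congr 1; funext y; simp [mul_smul]

@[simp] lemma tr_one (v : α →₀ ℚ) : tr (1 : G) v = v := by
  simp only [tr, lmapDomain_apply]
  have : (fun y : α => (1:G) • y) = id := by funext y; simp
  rw [this, Finsupp.mapDomain_id]

/-- total sum of coefficients -/
noncomputable def aug (α : Type*) : (α →₀ ℚ) →ₗ[ℚ] ℚ :=
  Finsupp.linearCombination ℚ (fun _ : α => (1 : ℚ))

@[simp] lemma aug_single (x : α) (c : ℚ) : aug α (single x c) = c := by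
  simp [aug]

lemma aug_mapDomain {β : Type*} (f : α → β) (v : α →₀ ℚ) :
    aug β (Finsupp.mapDomain f v) = aug α v := by
  simp [aug, Finsupp.linearCombination_mapDomain]; rfl

@[simp] lemma aug_tr (g : G) (v : α →₀ ℚ) : aug α (tr g v) = aug α v := by
  simp [aug_mapDomain]

lemma tr_fixed (g : G) (v : α →₀ ℚ) (h : ∀ x ∈ v.support, g • x = x) : tr g v = v := by
  classical
  simp only [tr, lmapDomain_apply, Finsupp.mapDomain]
  rw [Finsupp.sum_congr (g2 := fun x c => single x c) (fun x hx => by rw [h x hx])]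
  exact Finsupp.sum_single v

/-- stabilizer of a vector -/
noncomputable def stab (v : α →₀ ℚ) : Subgroup G where
  carrier := {g : G | tr g v = v}
  one_mem' := tr_one v
  mul_mem' := by
    intro a b ha hb
    simp only [Set.mem_setOf_eq] at *
    rw [← tr_tr, hb, ha]
  inv_mem' := by
    intro a ha
    simp only [Set.mem_setOf_eq] at *
    conv_lhs => rw [← ha]
    rw [tr_tr, inv_mul_cancel, tr_one]

lemma mem_stab {v : α →₀ ℚ} {g : G} : g ∈ stab v ↔ tr g v = v := Iff.rfl

end act

end Aux13

namespace Aux13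

open Finsupp Set Topology Filter

variable {G : Type*} [Group G] [TopologicalSpace G]

section vanDantzig
variable [IsTopologicalGroup G] [TotallyDisconnectedSpace G] [LocallyCompactSpace G]

omit [LocallyCompactSpace G] in
theorem t2 : T2Space G := by
  rw [IsTopologicalGroup.t2Space_iff_one_closed]
  have h1 : closure ({1} : Set G) ⊆ connectedComponent (1 : G) :=
    (isPreconnected_singleton.closure).subset_connectedComponent
      (subset_closure rfl)
  rw [totallyDisconnectedSpace_iff_connectedComponent_singleton.mp ‹_› 1] at h1
  exact isClosed_of_closure_subset h1

theorem exists_compact_open_nhd_one : ∃ W : Set G, IsCompact W ∧ IsOpen W ∧ (1 : G) ∈ W := by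
  have : T2Space G := t2
  obtain ⟨K, hK, hKn⟩ := exists_compact_mem_nhds (1 : G)
  have : interior K ∈ 𝓝 (1 : G) := interior_mem_nhds.mpr hKn
  obtain ⟨V, hV, h1V, hVK⟩ :=
    (loc_compact_Haus_tot_disc_of_zero_dim (H := G)).mem_nhds_iff.mp this
  exact ⟨V, hK.of_isClosed_subset hV.1 (hVK.trans interior_subset), hV.2, h1V⟩

open scoped Pointwise in
theorem vanDantzig : ∃ O : Subgroup G, IsOpen (O : Set G) ∧ IsCompact (O : Set G) := by
  obtain ⟨W, hWc, hWo, h1W⟩ := exists_compact_open_nhd_one (G := G)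
  -- find T ∈ 𝓝 1 with W * T ⊆ W
  have key : ∃ T ∈ 𝓝 (1 : G), W * T ⊆ W := by
    apply hWc.induction_on (p := fun S => ∃ T ∈ 𝓝 (1 : G), S * T ⊆ W)
      ⟨Set.univ, by simp only [Filter.univ_mem, Set.empty_mul, Set.empty_subset, and_self]⟩
      (fun _ _ huv ⟨T, hT, mem⟩ => ⟨T, hT, (Set.mul_subset_mul_right huv).trans mem⟩)
      (fun U V ⟨T₁, hT₁, mem1⟩ ⟨T₂, hT₂, mem2⟩ => ⟨T₁ ∩ T₂, Filter.inter_mem hT₁ hT₂, by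
        rw [Set.union_mul]
        exact Set.union_subset
          ((Set.mul_subset_mul_left Set.inter_subset_left).trans mem1)
          ((Set.mul_subset_mul_left Set.inter_subset_right).trans mem2)⟩)
    intro x memW
    have : (x, 1) ∈ (fun p : G × G => p.1 * p.2) ⁻¹' W := by simpa using memW
    rcases isOpen_prod_iff.mp (continuous_mul.isOpen_preimage W hWo) x 1 this with
      ⟨U, V, Uopen, Vopen, xmemU, onememV, prodsub⟩
    have h6 : U * V ⊆ W := Set.mul_subset_iff.mpr fun _ hx _ hy => prodsub (Set.mk_mem_prod hx hy)
    exact ⟨U ∩ W, ⟨U, Uopen.mem_nhds xmemU, W, fun _ a => a, rfl⟩,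
      V, Vopen.mem_nhds onememV, fun _ a => h6 ((Set.mul_subset_mul_right Set.inter_subset_left) a)⟩
  obtain ⟨T, hTn, hTW⟩ := key
  rcases mem_nhds_iff.mp hTn with ⟨U, UsubT, Uopen, onememU⟩
  set S : Set G := U ∩ U⁻¹ with hS
  have hSsymm : S⁻¹ = S := by rw [hS, Set.inter_inv, inv_inv, Set.inter_comm]
  have hSopen : IsOpen S := Uopen.inter Uopen.inv
  have h1S : (1 : G) ∈ S := ⟨onememU, by simpa using onememU⟩
  have hSW : ∀ g ∈ Subgroup.closure S, ∀ w ∈ W, w * g ∈ W := by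
    intro g hg
    have hg' : g ∈ Submonoid.closure S := by
      have := Subgroup.closure_toSubmonoid S
      have hgs : g ∈ (Subgroup.closure S).toSubmonoid := hg
      rw [this, hSsymm, Set.union_self] at hgs
      exact hgs
    have : Submonoid.closure S ≤
        { carrier := {g : G | ∀ w ∈ W, w * g ∈ W}
          one_mem' := fun w hw => by simpa using hw
          mul_mem' := fun {x y} hx hy w hw => by
            rw [← mul_assoc]; exact hy _ (hx _ hw) } := by
      rw [Submonoid.closure_le]
      intro x hx w hw
      exact hTW (Set.mul_mem_mul hw (UsubT hx.1))
    exact this hg'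
  have hOopen : IsOpen ((Subgroup.closure S : Subgroup G) : Set G) :=
    Subgroup.isOpen_of_mem_nhds _ (Filter.mem_of_superset (hSopen.mem_nhds h1S)
      Subgroup.subset_closure)
  refine ⟨Subgroup.closure S, hOopen, ?_⟩
  have hsub : (Subgroup.closure S : Set G) ⊆ W := fun g hg => by
    simpa using hSW g hg 1 h1W
  exact hWc.of_isClosed_subset (Subgroup.isClosed_of_isOpen _ hOopen) hsub

end vanDantzig

end Aux13

namespace Aux13

open Finsupp Set Topology Filter Pointwise

variable {G : Type*} [Group G]

section helpers
variable {α : Type*} [MulAction G α]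

lemma tr_eq_of_mk_eq {v : α →₀ ℚ} {H : Subgroup G} (hH : ∀ h ∈ H, tr h v = v)
    {g g' : G} (h : (QuotientGroup.mk g : G ⧸ H) = QuotientGroup.mk g') :
    tr g v = tr g' v := by
  have hmem : g⁻¹ * g' ∈ H := (QuotientGroup.eq).mp h
  have := hH _ hmem
  calc tr g v = tr g (tr (g⁻¹ * g') v) := by rw [this]
    _ = tr (g * (g⁻¹ * g')) v := tr_tr _ _ _
    _ = tr g' v := by rw [mul_inv_cancel_left]

/-- the set of translates of elements of `s` -/
def transSet (s : Finset (α →₀ ℚ)) : Set (α →₀ ℚ) :=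
  {x | ∃ g : G, ∃ v ∈ s, x = tr g v}

lemma tr_mem_transSet {s : Finset (α →₀ ℚ)} {v : α →₀ ℚ} (hv : v ∈ s) (g : G) :
    tr g v ∈ transSet (G := G) s := ⟨g, v, hv, rfl⟩

lemma mem_transSet_self {s : Finset (α →₀ ℚ)} {v : α →₀ ℚ} (hv : v ∈ s) :
    v ∈ transSet (G := G) s := ⟨1, v, hv, (tr_one v).symm⟩

lemma tr_mem_span {s : Finset (α →₀ ℚ)} (g : G) {x : α →₀ ℚ}
    (hx : x ∈ Submodule.span ℚ (transSet (G := G) s)) :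
    tr g x ∈ Submodule.span ℚ (transSet (G := G) s) := by
  have h1 : tr (G := G) g '' transSet (G := G) s ⊆ transSet (G := G) s := by
    rintro - ⟨y, ⟨h, v, hv, rfl⟩, rfl⟩
    rw [tr_tr]
    exact tr_mem_transSet hv _
  have hmap : Submodule.map (tr (G := G) g) (Submodule.span ℚ (transSet (G := G) s)) ≤
      Submodule.span ℚ (transSet (G := G) s) := by
    rw [← Submodule.span_image]
    exact Submodule.span_mono h1
  exact hmap ⟨x, hx, rfl⟩

lemma span_transSet_le_ker {s : Finset (α →₀ ℚ)}
    (h : ∀ v ∈ s, aug α v = 0) :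
    Submodule.span ℚ (transSet (G := G) s) ≤ LinearMap.ker (aug α) := by
  rw [Submodule.span_le]
  rintro - ⟨g, v, hv, rfl⟩
  have : aug α (tr (G := G) g v) = 0 := by rw [aug_tr, h v hv]
  simpa [LinearMap.mem_ker, tr] using this

end helpers

end Aux13

namespace Aux13

open Finsupp Set Topology Filter Pointwise

variable {G : Type*} [Group G]

/-- coordinatewise action of `G` on a sigma type -/
instance sigmaMulAction {ι : Type*} {β : ι → Type*} [∀ i, MulAction G (β i)] :
    MulAction G (Σ i, β i) where
  smul g x := ⟨x.1, g • x.2⟩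
  one_smul x := Sigma.ext rfl (heq_of_eq (one_smul _ _))
  mul_smul g h x := Sigma.ext rfl (heq_of_eq (mul_smul _ _ _))

lemma sigma_smul_def {ι : Type*} {β : ι → Type*} [∀ i, MulAction G (β i)] (g : G)
    (x : Σ i, β i) : g • x = ⟨x.1, g • x.2⟩ := rfl

lemma sigma_stabilizer_eq {ι : Type*} {β : ι → Type*} [∀ i, MulAction G (β i)]
    (x : Σ i, β i) : MulAction.stabilizer G x = MulAction.stabilizer G x.2 := by
  ext g
  simp only [MulAction.mem_stabilizer_iff, sigma_smul_def]
  constructor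
  · intro h
    have := (Sigma.mk.inj_iff.mp h).2
    exact eq_of_heq this
  · intro h
    exact Sigma.ext rfl (heq_of_eq h)

section topo
variable [TopologicalSpace G] [IsTopologicalGroup G]

lemma isOpen_pointStab {O : Subgroup G} (hO : IsOpen (O : Set G)) (x : G ⧸ O) :
    IsOpen ((MulAction.stabilizer G x : Subgroup G) : Set G) := by
  obtain ⟨a, rfl⟩ := QuotientGroup.mk_surjective x
  have heq : ((MulAction.stabilizer G (QuotientGroup.mk a : G ⧸ O) : Subgroup G) : Set G)
      = (fun g : G => a⁻¹ * g⁻¹ * a) ⁻¹' (O : Set G) := by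
    ext g
    simp only [SetLike.mem_coe, MulAction.mem_stabilizer_iff, Set.mem_preimage]
    have h1 : g • (QuotientGroup.mk a : G ⧸ O) = QuotientGroup.mk (g * a) := rfl
    rw [h1, QuotientGroup.eq]
    constructor
    · intro h; convert h using 1; group
    · intro h; convert h using 1; group
  rw [heq]
  exact hO.preimage (by continuity)

lemma isOpen_stab {α : Type*} [MulAction G α] (v : α →₀ ℚ)
    (h : ∀ x : α, IsOpen ((MulAction.stabilizer G x : Subgroup G) : Set G)) :
    IsOpen ((stab (G := G) v : Subgroup G) : Set G) := by
  classical
  have hle : (⨅ x : v.support, MulAction.stabilizer G (x : α)) ≤ stab (G := G) v := by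
    intro g hg
    rw [mem_stab]
    apply tr_fixed
    intro x hx
    have := Subgroup.mem_iInf.mp hg ⟨x, hx⟩
    exact this
  have hopen : IsOpen (((⨅ x : v.support, MulAction.stabilizer G (x : α)) : Subgroup G) : Set G) := by
    rw [Subgroup.coe_iInf]
    exact isOpen_iInter_of_finite fun x => h _
  exact Subgroup.isOpen_mono hle hopen

/-- image of a compact set in `G ⧸ O` is finite when `O` is open -/
lemma finite_mk_image {O : Subgroup G} (hO : IsOpen (O : Set G)) {K : Set G}
    (hK : IsCompact K) : ((QuotientGroup.mk '' K : Set (G ⧸ O))).Finite := by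
  have hcover : K ⊆ ⋃ g : G, g • (O : Set G) := by
    intro k _
    exact Set.mem_iUnion.mpr ⟨k, ⟨1, O.one_mem, by simp⟩⟩
  obtain ⟨t, ht⟩ := hK.elim_finite_subcover (fun g : G => g • (O : Set G))
    (fun g => hO.smul g) hcover
  apply Set.Finite.subset ((t : Set G).toFinite.image QuotientGroup.mk)
  rintro - ⟨k, hk, rfl⟩
  obtain ⟨g, hgt, o, ho, rfl⟩ : ∃ g ∈ t, ∃ o ∈ O, g * o = k := by
    have := ht hk
    simp only [Set.mem_iUnion] at this
    obtain ⟨g, hgt, hgo⟩ := this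
    obtain ⟨o, ho, rfl⟩ := hgo
    exact ⟨g, hgt, o, ho, rfl⟩
  refine ⟨g, hgt, ?_⟩
  rw [QuotientGroup.eq]
  simpa using ho
end topo

end Aux13

namespace Aux13

open Finsupp Set Topology Filter Pointwise

variable {G : Type*} [Group G]

/-- basic generator of the augmentation ideal -/
noncomputable def gen (O : Subgroup G) (a : G) : (G ⧸ O) →₀ ℚ :=
  single (QuotientGroup.mk a) 1 - single (QuotientGroup.mk 1) 1

lemma aug_gen (O : Subgroup G) (a : G) : aug (G ⧸ O) (gen O a) = 0 := by
  simp [gen]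

lemma tr_gen (O : Subgroup G) (g a : G) :
    tr g (gen O a) = single (QuotientGroup.mk (g * a)) 1 - single (QuotientGroup.mk g) 1 := by
  have h1 : g • (QuotientGroup.mk a : G ⧸ O) = QuotientGroup.mk (g * a) := rfl
  have h2 : g • (QuotientGroup.mk 1 : G ⧸ O) = QuotientGroup.mk g := by
    show QuotientGroup.mk (g * 1) = _
    rw [mul_one]
  rw [gen, map_sub, tr_single, tr_single, h1, h2]

section lemA
variable [TopologicalSpace G] [IsTopologicalGroup G]

theorem augKer_fg_of_cg
    (hcg : ∃ K : Set G, IsCompact K ∧ Subgroup.closure K = ⊤)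
    {O : Subgroup G} (hOo : IsOpen (O : Set G)) :
    ∃ s : Finset ((G ⧸ O) →₀ ℚ), (∀ v ∈ s, aug (G ⧸ O) v = 0) ∧
      Submodule.span ℚ (transSet (G := G) s) = LinearMap.ker (aug (G ⧸ O)) := by
  classical
  obtain ⟨K, hKc, hKtop⟩ := hcg
  have hcover : K ⊆ ⋃ g : G, g • (O : Set G) := fun k _ =>
    Set.mem_iUnion.mpr ⟨k, ⟨1, O.one_mem, by simp⟩⟩
  obtain ⟨t, ht⟩ := hKc.elim_finite_subcover (fun g : G => g • (O : Set G))
    (fun g => hOo.smul g) hcover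
  refine ⟨t.image (gen O), ?_, ?_⟩
  · rintro v hv
    obtain ⟨a, -, rfl⟩ := Finset.mem_image.mp hv
    exact aug_gen O a
  set s : Finset ((G ⧸ O) →₀ ℚ) := t.image (gen O) with hs
  set M := Submodule.span ℚ (transSet (G := G) s) with hM
  have claim : ∀ g : G, gen O g ∈ M := by
    intro g
    have hg : g ∈ Subgroup.closure K := by rw [hKtop]; trivial
    induction hg using Subgroup.closure_induction with
    | mem k hk =>
      have := ht hk
      simp only [Set.mem_iUnion] at this
      obtain ⟨a, hat, o, ho, rfl⟩ : ∃ a ∈ t, ∃ o ∈ O, a * o = k := by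
        obtain ⟨a, hat, o, ho, rfl⟩ := by
          simpa only [Set.mem_iUnion, Set.mem_smul_set, smul_eq_mul, exists_prop] using this
        exact ⟨a, hat, o, ho, rfl⟩
      have hmk : (QuotientGroup.mk (a * o) : G ⧸ O) = QuotientGroup.mk a := by
        rw [QuotientGroup.eq]; group; simpa using O.inv_mem ho
      have : gen O (a * o) = gen O a := by rw [gen, gen, hmk]
      rw [this]
      exact Submodule.subset_span (mem_transSet_self (Finset.mem_image_of_mem _ hat))
    | one =>
      have : gen O 1 = 0 := by simp [gen]
      rw [this]; exact M.zero_mem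
    | mul g h _ _ hg hh =>
      have key : gen O (g * h) = tr g (gen O h) + gen O g := by
        rw [tr_gen, gen, gen]; abel
      rw [key]
      exact M.add_mem (tr_mem_span g hh) hg
    | inv g _ hg =>
      have key : gen O g⁻¹ = -(tr g⁻¹ (gen O g)) := by
        rw [tr_gen, gen, inv_mul_cancel]; abel
      rw [key]
      exact M.neg_mem (tr_mem_span g⁻¹ hg)
  apply le_antisymm
  · apply span_transSet_le_ker
    rintro v hv
    obtain ⟨a, -, rfl⟩ := Finset.mem_image.mp hv
    exact aug_gen O a
  · intro w hw
    have hker : aug (G ⧸ O) w = 0 := hw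
    have main : ∀ w : (G ⧸ O) →₀ ℚ,
        w - (aug (G ⧸ O) w) • single (QuotientGroup.mk 1) 1 ∈ M := by
      intro w
      induction w using Finsupp.induction_linear with
      | zero => simp
      | add f g hf hg =>
        have : (f + g) - (aug (G ⧸ O) (f + g)) • single (QuotientGroup.mk 1) (1:ℚ)
            = (f - (aug (G ⧸ O) f) • single (QuotientGroup.mk 1) 1)
              + (g - (aug (G ⧸ O) g) • single (QuotientGroup.mk 1) 1) := by
          rw [map_add, add_smul]; abel
        rw [this]; exact M.add_mem hf hg
      | single x c =>
        obtain ⟨a, rfl⟩ := QuotientGroup.mk_surjective x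
        have : single (QuotientGroup.mk a) c - (aug (G ⧸ O) (single (QuotientGroup.mk a) c))
            • single (QuotientGroup.mk 1) (1:ℚ) = c • gen O a := by
          rw [aug_single, gen, smul_sub, smul_single, smul_single]
          simp
        rw [this]
        exact M.smul_mem c (claim a)
    have := main w
    rwa [hker, zero_smul, sub_zero] at this

end lemA

end Aux13

namespace Aux13

open Finsupp Set Topology Filter Pointwise

variable {G : Type*} [Group G]

lemma aug_eq_sum {α : Type*} (v : α →₀ ℚ) : aug α v = v.sum fun _ c => c := by
  simp [aug, Finsupp.linearCombination_apply]

section lemB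
variable [TopologicalSpace G] [IsTopologicalGroup G]

theorem cg_of_augKer_fg {O : Subgroup G} (hOo : IsOpen (O : Set G))
    (hOc : IsCompact (O : Set G)) (s : Finset ((G ⧸ O) →₀ ℚ))
    (hspan : Submodule.span ℚ (transSet (G := G) s) = LinearMap.ker (aug (G ⧸ O))) :
    ∃ K : Set G, IsCompact K ∧ Subgroup.closure K = ⊤ := by
  classical
  set T : Finset G := s.biUnion (fun v => v.support.image Quotient.out) with hT
  set H : Subgroup G := Subgroup.closure ((O : Set G) ∪ (T : Set G)) with hH
  have hOH : ∀ o ∈ O, o ∈ H := fun o ho =>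
    Subgroup.subset_closure (Set.mem_union_left _ ho)
  have hrep : ∀ (x : G ⧸ O) (g : G), QuotientGroup.mk g = x → (g ∈ H ↔ x.out ∈ H) := by
    intro x g hg
    have : (QuotientGroup.mk x.out : G ⧸ O) = QuotientGroup.mk g := by
      rw [QuotientGroup.out_eq' x, ← hg]
    have hmem : x.out⁻¹ * g ∈ O := (QuotientGroup.eq).mp this
    constructor
    · intro h
      have : x.out = g * (x.out⁻¹ * g)⁻¹ := by group
      rw [this]
      exact H.mul_mem h (H.inv_mem (hOH _ hmem))
    · intro h
      have : g = x.out * (x.out⁻¹ * g) := by group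
      rw [this]
      exact H.mul_mem h (hOH _ hmem)
  set φ : ((G ⧸ O) →₀ ℚ) →ₗ[ℚ] ℚ :=
    Finsupp.linearCombination ℚ (fun x : G ⧸ O => if x.out ∈ H then (1:ℚ) else 0) with hφ
  have hφker : ∀ w ∈ LinearMap.ker (aug (G ⧸ O)), φ w = 0 := by
    have hle : LinearMap.ker (aug (G ⧸ O)) ≤ LinearMap.ker φ := by
      rw [← hspan, Submodule.span_le]
      rintro - ⟨g, v, hv, rfl⟩
      have hva : aug (G ⧸ O) v = 0 := by
        have := (hspan ▸ Submodule.subset_span (mem_transSet_self hv) :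
          v ∈ LinearMap.ker (aug (G ⧸ O)))
        exact this
      have step1 : φ (tr g v) =
          v.sum (fun x c => c • (if (g • x).out ∈ H then (1:ℚ) else 0)) := by
        rw [tr_apply, Finsupp.linearCombination_mapDomain, Finsupp.linearCombination_apply]
        rfl
      have step2 : v.sum (fun x c => c • (if (g • x).out ∈ H then (1:ℚ) else 0)) =
          v.sum (fun x c => c * (if g ∈ H then (1:ℚ) else 0)) := by
        apply Finsupp.sum_congr
        intro x hx
        have hxT : x.out ∈ H := by
          apply Subgroup.subset_closure
          apply Set.mem_union_right
          exact Finset.mem_coe.mpr (Finset.mem_biUnion.mpr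
            ⟨v, hv, Finset.mem_image_of_mem _ hx⟩)
        have h1 : (QuotientGroup.mk (g * x.out) : G ⧸ O) = g • x := by
          have : g • x = g • (QuotientGroup.mk x.out : G ⧸ O) := by
            rw [QuotientGroup.out_eq' x]
          rw [this]; rfl
        have h2 : (g * x.out ∈ H) ↔ ((g • x).out ∈ H) := hrep _ _ h1
        have h3 : (g ∈ H) ↔ (g * x.out ∈ H) := by
          constructor
          · intro h; exact H.mul_mem h hxT
          · intro h
            have : g = (g * x.out) * x.out⁻¹ := by group
            rw [this]; exact H.mul_mem h (H.inv_mem hxT)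
        rw [smul_eq_mul]
        congr 1
        rw [← h2, ← h3]
      have step3 : v.sum (fun x c => c * (if g ∈ H then (1:ℚ) else 0)) =
          (aug (G ⧸ O) v) * (if g ∈ H then (1:ℚ) else 0) := by
        rw [aug_eq_sum, Finsupp.sum_mul]
      simp only [SetLike.mem_coe, LinearMap.mem_ker]
      rw [step1, step2, step3, hva, zero_mul]
    intro w hw
    exact hle hw
  have hgen : ∀ g : G, g ∈ H := by
    intro g
    have hker : gen O g ∈ LinearMap.ker (aug (G ⧸ O)) := by
      simp [LinearMap.mem_ker, aug_gen]
    have := hφker _ hker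
    rw [hφ, gen, map_sub] at this
    simp only [Finsupp.linearCombination_single, smul_eq_mul, mul_one] at this
    have h1H : ((QuotientGroup.mk 1 : G ⧸ O)).out ∈ H := by
      rw [← hrep (QuotientGroup.mk 1) 1 rfl]
      exact H.one_mem
    rw [if_pos h1H] at this
    by_contra hg
    have hneg : ¬ ((QuotientGroup.mk g : G ⧸ O)).out ∈ H := by
      rw [← hrep (QuotientGroup.mk g) g rfl]
      exact hg
    rw [if_neg hneg] at this
    norm_num at this
  refine ⟨(O : Set G) ∪ (T : Set G), hOc.union (T : Set G).toFinite.isCompact, ?_⟩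
  rw [← hH]
  exact (Subgroup.eq_top_iff' H).mpr hgen

end lemB

end Aux13

namespace Aux13

open Finsupp Set Topology Filter Pointwise

variable {G : Type*} [Group G]

section avg
variable {α : Type*} [MulAction G α]

lemma mem_smul_finset_iff {H S : Subgroup G}
    (hfin : ((QuotientGroup.mk '' (S : Set G)) : Set (G ⧸ H)).Finite)
    {a : G} (ha : a ∈ S) (z : G ⧸ H) :
    a • z ∈ hfin.toFinset ↔ z ∈ hfin.toFinset := by
  simp only [Set.Finite.mem_toFinset, Set.mem_image, SetLike.mem_coe]
  constructor
  · rintro ⟨b, hb, hab⟩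
    refine ⟨a⁻¹ * b, S.mul_mem (S.inv_mem ha) hb, ?_⟩
    have : z = a⁻¹ • (a • z) := by rw [← mul_smul, inv_mul_cancel, one_smul]
    rw [this, ← hab]
    rfl
  · rintro ⟨b, hb, rfl⟩
    exact ⟨a * b, S.mul_mem ha hb, rfl⟩

variable (H S : Subgroup G) (u : α →₀ ℚ)

/-- average of translates of `u` over the image of `S` in `G ⧸ H` -/
noncomputable def avg (hfin : ((QuotientGroup.mk '' (S : Set G)) : Set (G ⧸ H)).Finite) :
    α →₀ ℚ :=
  ((hfin.toFinset.card : ℚ))⁻¹ • ∑ z ∈ hfin.toFinset, tr (Quotient.out z) u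

variable {H S u}

lemma avg_invariant (hfin : ((QuotientGroup.mk '' (S : Set G)) : Set (G ⧸ H)).Finite)
    (hu : ∀ h ∈ H, tr h u = u) {a : G} (ha : a ∈ S) :
    tr a (avg H S u hfin) = avg H S u hfin := by
  classical
  rw [avg, map_smul, map_sum]
  congr 1
  have step1 : ∀ z ∈ hfin.toFinset, tr a (tr (Quotient.out z) u)
      = tr (Quotient.out (a • z)) u := by
    intro z hz
    rw [tr_tr]
    apply tr_eq_of_mk_eq hu
    have h1 : (QuotientGroup.mk (a * Quotient.out z) : G ⧸ H) = a • z := by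
      have : a • z = a • (QuotientGroup.mk (Quotient.out z) : G ⧸ H) := by
        rw [QuotientGroup.out_eq']
      rw [this]; rfl
    rw [h1, QuotientGroup.out_eq']
  rw [Finset.sum_congr rfl step1]
  refine Finset.sum_nbij' (fun z => a • z) (fun z => a⁻¹ • z) ?_ ?_ ?_ ?_ ?_
  · intro z hz; exact (mem_smul_finset_iff hfin ha z).mpr hz
  · intro z hz
    have := (mem_smul_finset_iff hfin (S.inv_mem ha) z).mpr hz
    exact this
  · intro z _; show a⁻¹ • a • z = z; rw [← mul_smul, inv_mul_cancel, one_smul]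
  · intro z _; show a • a⁻¹ • z = z; rw [← mul_smul, mul_inv_cancel, one_smul]
  · intro z _; rfl

lemma avg_apply_linear (hfin : ((QuotientGroup.mk '' (S : Set G)) : Set (G ⧸ H)).Finite)
    (ψ : (α →₀ ℚ) →ₗ[ℚ] ℚ) (hψ : ∀ g : G, ψ (tr g u) = ψ u) :
    ψ (avg H S u hfin) = ψ u := by
  classical
  have hne : hfin.toFinset.Nonempty := by
    rw [Set.Finite.toFinset_nonempty]
    exact ⟨QuotientGroup.mk 1, 1, S.one_mem, rfl⟩
  have hcard : (hfin.toFinset.card : ℚ) ≠ 0 := by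
    exact_mod_cast Finset.card_ne_zero_of_mem hne.choose_spec
  rw [avg, map_smul, map_sum]
  simp only [hψ]
  rw [Finset.sum_const, smul_eq_mul, nsmul_eq_mul]
  field_simp

end avg

end Aux13

namespace Aux13

open Finsupp Set Topology Filter Pointwise

variable {G : Type*} [Group G]

lemma smul_mk_one {O : Subgroup G} (g : G) :
    g • (QuotientGroup.mk 1 : G ⧸ O) = QuotientGroup.mk g := by
  show QuotientGroup.mk (g * 1) = _
  rw [mul_one]

lemma out_smul_mk_one {O : Subgroup G} (c : G ⧸ O) :
    (Quotient.out c) • (QuotientGroup.mk 1 : G ⧸ O) = c := by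
  rw [smul_mk_one, QuotientGroup.out_eq']

lemma mk_out_smul {O : Subgroup G} (g : G) (c : G ⧸ O) :
    (QuotientGroup.mk (Quotient.out (g • c)) : G ⧸ O) = QuotientGroup.mk (g * Quotient.out c) := by
  rw [QuotientGroup.out_eq']
  conv_lhs => rw [← QuotientGroup.out_eq' c]
  rfl

lemma single_eq_tr_out {O : Subgroup G} (c : G ⧸ O) (a : ℚ) :
    single c a = a • tr (G := G) (Quotient.out c) (single (QuotientGroup.mk 1) (1:ℚ)) := by
  rw [tr_single, out_smul_mk_one, smul_single, smul_eq_mul, mul_one]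

lemma sigma_single_eq_tr_out {ι : Type*} {A : ι → Subgroup G} (i : ι) (c : G ⧸ A i) (a : ℚ) :
    single (⟨i, c⟩ : Σ i, G ⧸ A i) a
      = a • tr (G := G) (Quotient.out c) (single ⟨i, QuotientGroup.mk 1⟩ (1:ℚ)) := by
  rw [tr_single]
  have h : (Quotient.out c) • (⟨i, QuotientGroup.mk 1⟩ : Σ i, G ⧸ A i) = ⟨i, c⟩ :=
    Sigma.ext rfl (heq_of_eq (out_smul_mk_one c))
  rw [smul_single, smul_eq_mul, mul_one]
  exact congrArg (fun y => single y a) h.symm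

lemma sigma_tr_single {ι : Type*} {A : ι → Subgroup G} (g : G) (i : ι) (c : G ⧸ A i) (b : ℚ) :
    tr g (single (⟨i, c⟩ : Σ i, G ⧸ A i) b) = single ⟨i, g • c⟩ b := by
  rw [tr_single]
  rfl

lemma tr_delta_one {O : Subgroup G} {o : G} (ho : o ∈ O) :
    tr o (single (QuotientGroup.mk 1 : G ⧸ O) (1:ℚ)) = single (QuotientGroup.mk 1) 1 := by
  rw [tr_single, smul_mk_one]
  congr 1
  rw [QuotientGroup.eq]
  simpa using O.inv_mem ho

section lemD
variable [TopologicalSpace G] [IsTopologicalGroup G]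

theorem augKer_fg_of_FP1 {n m : ℕ} {A : Fin n → Subgroup G} {B : Fin m → Subgroup G}
    (hA : ∀ i, IsOpen ((A i : Set G)) ∧ IsCompact ((A i : Set G)))
    (d : ((Σ j, G ⧸ B j) →₀ ℚ) →ₗ[ℚ] ((Σ i, G ⧸ A i) →₀ ℚ))
    (e : ((Σ i, G ⧸ A i) →₀ ℚ) →ₗ[ℚ] ℚ)
    (hd : ∀ (g : G) f, d (tr g f) = tr g (d f))
    (he : ∀ (g : G) f, e (tr g f) = e f)
    (hesurj : Function.Surjective e)
    (hrange : LinearMap.range d = LinearMap.ker e)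
    {O : Subgroup G} (hOo : IsOpen (O : Set G)) (hOc : IsCompact (O : Set G)) :
    ∃ s : Finset ((G ⧸ O) →₀ ℚ), (∀ v ∈ s, aug (G ⧸ O) v = 0) ∧
      Submodule.span ℚ (transSet (G := G) s) = LinearMap.ker (aug (G ⧸ O)) := by
  classical
  set δ₁ : (G ⧸ O) →₀ ℚ := single (QuotientGroup.mk 1) 1 with hδ₁
  have hδinv : ∀ o ∈ O, tr o δ₁ = δ₁ := fun o ho => tr_delta_one ho
  -- the averaged vectors q i
  have hfinA : ∀ i, ((QuotientGroup.mk '' ((A i) : Set G)) : Set (G ⧸ O)).Finite :=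
    fun i => finite_mk_image hOo (hA i).2
  set q : ∀ i : Fin n, (G ⧸ O) →₀ ℚ := fun i => avg O (A i) δ₁ (hfinA i) with hq
  have hq_inv : ∀ i, ∀ a ∈ A i, tr a (q i) = q i :=
    fun i a ha => avg_invariant (hfinA i) hδinv ha
  have hq_aug : ∀ i, aug (G ⧸ O) (q i) = 1 := by
    intro i
    have := avg_apply_linear (hfinA i) (aug (G ⧸ O)) (fun g => aug_tr g δ₁)
    rw [hq]
    rw [this, hδ₁, aug_single]
  -- the weights
  set lam : Fin n → ℚ := fun i => e (single ⟨i, QuotientGroup.mk 1⟩ 1) with hlam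
  have he_single : ∀ (i : Fin n) (c : G ⧸ A i) (a : ℚ),
      e (single (⟨i, c⟩ : Σ i, G ⧸ A i) a) = a * lam i := by
    intro i c a
    rw [sigma_single_eq_tr_out, map_smul, he, smul_eq_mul, hlam]
  -- the lifting map τ
  set τ : ((Σ i, G ⧸ A i) →₀ ℚ) →ₗ[ℚ] ((G ⧸ O) →₀ ℚ) :=
    Finsupp.linearCombination ℚ
      (fun x : Σ i, G ⧸ A i => lam x.1 • tr (Quotient.out x.2) (q x.1)) with hτ
  have hτ_single : ∀ (i : Fin n) (c : G ⧸ A i) (a : ℚ),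
      τ (single (⟨i, c⟩ : Σ i, G ⧸ A i) a) = a • (lam i • tr (Quotient.out c) (q i)) := by
    intro i c a
    rw [hτ, Finsupp.linearCombination_single]
  have hτ_e : ∀ f, aug (G ⧸ O) (τ f) = e f := by
    intro f
    induction f using Finsupp.induction_linear with
    | zero => simp
    | add f g hf hg => rw [map_add, map_add, map_add, hf, hg]
    | single x b =>
      obtain ⟨i, c⟩ := x
      rw [hτ_single, map_smul, map_smul, aug_tr, hq_aug, he_single]
      simp
  have hτ_tr : ∀ (g : G) f, τ (tr g f) = tr g (τ f) := by
    intro g f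
    induction f using Finsupp.induction_linear with
    | zero => simp
    | add f f' hf hf' => rw [map_add, map_add, hf, hf', map_add τ f f']; exact (map_add (tr g) (τ f) (τ f')).symm
    | single x b =>
      obtain ⟨i, c⟩ := x
      rw [sigma_tr_single, hτ_single, hτ_single]
      have : tr (Quotient.out (g • c)) (q i) = tr (g * Quotient.out c) (q i) :=
        tr_eq_of_mk_eq (hq_inv i) (mk_out_smul g c)
      rw [this, ← tr_tr, map_smul, map_smul]
  -- the invariant vector p₀
  obtain ⟨p, hp⟩ := hesurj 1
  have hstab : IsOpen ((stab (G := G) p : Subgroup G) : Set G) :=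
    isOpen_stab p (fun x => by
      rw [sigma_stabilizer_eq]
      exact isOpen_pointStab (hA x.1).1 x.2)
  set U : Subgroup G := O ⊓ stab (G := G) p with hU
  have hUo : IsOpen (U : Set G) := by
    rw [hU, Subgroup.coe_inf]
    exact hOo.inter hstab
  have hfinU : ((QuotientGroup.mk '' (O : Set G)) : Set (G ⧸ U)).Finite :=
    finite_mk_image hUo hOc
  have hu_p : ∀ h ∈ U, tr h p = p := by
    intro h hh
    exact mem_stab.mp (Subgroup.mem_inf.mp hh).2
  set p₀ : (Σ i, G ⧸ A i) →₀ ℚ := avg U O p hfinU with hp₀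
  have hp₀_inv : ∀ o ∈ O, tr o p₀ = p₀ := fun o ho => avg_invariant hfinU hu_p ho
  have hp₀_e : e p₀ = 1 := by
    rw [hp₀, avg_apply_linear hfinU e (fun g => he g p), hp]
  -- the section σ
  set σ : ((G ⧸ O) →₀ ℚ) →ₗ[ℚ] ((Σ i, G ⧸ A i) →₀ ℚ) :=
    Finsupp.linearCombination ℚ (fun c : G ⧸ O => tr (Quotient.out c) p₀) with hσ
  have hσ_single : ∀ (c : G ⧸ O) (b : ℚ), σ (single c b) = b • tr (Quotient.out c) p₀ := by
    intro c b
    rw [hσ, Finsupp.linearCombination_single]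
  have hσ_e : ∀ v, e (σ v) = aug (G ⧸ O) v := by
    intro v
    induction v using Finsupp.induction_linear with
    | zero => simp
    | add f g hf hg => rw [map_add, map_add, hf, hg, map_add]
    | single c b => rw [hσ_single, map_smul, he, hp₀_e, aug_single, smul_eq_mul, mul_one]
  have hσ_tr : ∀ (g : G) v, σ (tr g v) = tr g (σ v) := by
    intro g v
    induction v using Finsupp.induction_linear with
    | zero => simp
    | add f f' hf hf' => rw [map_add, map_add, hf, hf', map_add σ f f']; exact (map_add (tr g) (σ f) (σ f')).symm
    | single c b =>
      rw [tr_single, hσ_single, hσ_single]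
      have : tr (Quotient.out (g • c)) p₀ = tr (g * Quotient.out c) p₀ :=
        tr_eq_of_mk_eq hp₀_inv (mk_out_smul g c)
      rw [this, ← tr_tr, map_smul]
  -- the generators coming from d
  set w : Fin m → ((Σ i, G ⧸ A i) →₀ ℚ) :=
    fun j => d (single ⟨j, QuotientGroup.mk 1⟩ 1) with hw
  have hd_single : ∀ (j : Fin m) (c : G ⧸ B j) (a : ℚ),
      d (single (⟨j, c⟩ : Σ j, G ⧸ B j) a) = a • tr (Quotient.out c) (w j) := by
    intro j c a
    rw [sigma_single_eq_tr_out, map_smul, hd, hw]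
  have hw_ker : ∀ j, e (w j) = 0 := by
    intro j
    have : w j ∈ LinearMap.range d := ⟨single ⟨j, QuotientGroup.mk 1⟩ 1, rfl⟩
    rw [hrange] at this
    exact this
  -- the generating set
  set u₀ : (G ⧸ O) →₀ ℚ := δ₁ - τ (σ δ₁) with hu₀
  set s : Finset ((G ⧸ O) →₀ ℚ) :=
    insert u₀ (Finset.image (fun j => τ (w j)) Finset.univ) with hsdef
  have hu₀s : u₀ ∈ s := Finset.mem_insert_self _ _
  have hτws : ∀ j, τ (w j) ∈ s :=
    fun j => Finset.mem_insert_of_mem (Finset.mem_image_of_mem _ (Finset.mem_univ j))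
  have haug : ∀ v ∈ s, aug (G ⧸ O) v = 0 := by
    intro v hv
    rcases Finset.mem_insert.mp hv with h | h
    · rw [h, hu₀, map_sub, hτ_e, hσ_e, sub_self]
    · obtain ⟨j, -, rfl⟩ := Finset.mem_image.mp h
      rw [hτ_e, hw_ker]
  refine ⟨s, haug, ?_⟩
  set M := Submodule.span ℚ (transSet (G := G) s) with hM
  have claim1 : ∀ v : (G ⧸ O) →₀ ℚ, v - τ (σ v) ∈ M := by
    intro v
    induction v using Finsupp.induction_linear with
    | zero => rw [map_zero, map_zero, sub_zero]; exact M.zero_mem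
    | add f g hf hg =>
      have : (f + g) - τ (σ (f + g)) = (f - τ (σ f)) + (g - τ (σ g)) := by
        rw [map_add, map_add]; abel
      rw [this]; exact M.add_mem hf hg
    | single c b =>
      have key : single c b - τ (σ (single c b)) = b • tr (Quotient.out c) u₀ := by
        conv_lhs => rw [single_eq_tr_out c b]
        rw [map_smul, hσ_tr, map_smul, hτ_tr, ← smul_sub, ← map_sub]
      rw [key]
      exact M.smul_mem b (Submodule.subset_span (tr_mem_transSet hu₀s _))
  have claim2 : ∀ f : (Σ j, G ⧸ B j) →₀ ℚ, τ (d f) ∈ M := by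
    intro f
    induction f using Finsupp.induction_linear with
    | zero => rw [map_zero, map_zero]; exact M.zero_mem
    | add f f' hf hf' => rw [map_add, map_add]; exact M.add_mem hf hf'
    | single x b =>
      obtain ⟨j, c⟩ := x
      rw [hd_single, map_smul, hτ_tr]
      exact M.smul_mem b (Submodule.subset_span (tr_mem_transSet (hτws j) _))
  apply le_antisymm
  · exact span_transSet_le_ker haug
  · intro v hv
    have hva : aug (G ⧸ O) v = 0 := hv
    have hσv : σ v ∈ LinearMap.ker e := by
      rw [LinearMap.mem_ker, hσ_e, hva]
    rw [← hrange] at hσv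
    obtain ⟨f, hf⟩ := hσv
    have : v = (v - τ (σ v)) + τ (d f) := by rw [hf]; abel
    rw [this]
    exact M.add_mem (claim1 v) (claim2 f)

end lemD

end Aux13

namespace Aux13

open Finsupp Set Topology Filter Pointwise

variable {G : Type*} [Group G]

section lemC
variable [TopologicalSpace G] [IsTopologicalGroup G]

theorem FP1_of_augKer_fg {O : Subgroup G} (hOo : IsOpen (O : Set G))
    (hOc : IsCompact (O : Set G)) (s : Finset ((G ⧸ O) →₀ ℚ))
    (hspan : Submodule.span ℚ (transSet (G := G) s) = LinearMap.ker (aug (G ⧸ O))) :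
    ∃ (n m : ℕ) (A : Fin n → Subgroup G) (B : Fin m → Subgroup G),
      (∀ i, IsOpen ((A i : Set G)) ∧ IsCompact ((A i : Set G))) ∧
      (∀ j, IsOpen ((B j : Set G)) ∧ IsCompact ((B j : Set G))) ∧
      ∃ (d : ((Σ j, G ⧸ B j) →₀ ℚ) →ₗ[ℚ] ((Σ i, G ⧸ A i) →₀ ℚ))
        (e : ((Σ i, G ⧸ A i) →₀ ℚ) →ₗ[ℚ] ℚ),
        (∀ (g : G) f, d (tr g f) = tr g (d f)) ∧
        (∀ (g : G) f, e (tr g f) = e f) ∧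
        Function.Surjective e ∧ LinearMap.range d = LinearMap.ker e := by
  classical
  set A : Fin 1 → Subgroup G := fun _ => O with hAdef
  set vfun : Fin s.card → ((G ⧸ O) →₀ ℚ) := fun j => (s.equivFin.symm j : _) with hvfun
  have vmem : ∀ j, vfun j ∈ s := fun j => (s.equivFin.symm j).2
  have vsurj : ∀ v ∈ s, ∃ j, vfun j = v := by
    intro v hv
    exact ⟨s.equivFin ⟨v, hv⟩, by rw [hvfun]; simp⟩
  have hstabopen : ∀ j, IsOpen ((stab (G := G) (vfun j) : Subgroup G) : Set G) :=
    fun j => isOpen_stab _ (isOpen_pointStab hOo)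
  set B : Fin s.card → Subgroup G := fun j => O ⊓ stab (G := G) (vfun j) with hBdef
  have hB : ∀ j, IsOpen ((B j : Set G)) ∧ IsCompact ((B j : Set G)) := by
    intro j
    rw [hBdef]
    simp only [Subgroup.coe_inf]
    exact ⟨hOo.inter (hstabopen j),
      hOc.inter_right (Subgroup.isClosed_of_isOpen _ (hstabopen j))⟩
  have hBinv : ∀ j, ∀ b ∈ B j, tr b (vfun j) = vfun j := by
    intro j b hb
    exact mem_stab.mp ((Subgroup.mem_inf.mp hb).2)
  -- the equivalence between G ⧸ O and the one-component sigma type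
  set eqv : (G ⧸ O) ≃ (Σ i : Fin 1, G ⧸ A i) :=
    { toFun := fun c => ⟨0, c⟩
      invFun := fun x => x.2
      left_inv := fun c => rfl
      right_inv := fun x => Sigma.ext (Fin.fin_one_eq_zero x.1).symm HEq.rfl } with heqv
  set ιe : ((G ⧸ O) →₀ ℚ) ≃ₗ[ℚ] ((Σ i : Fin 1, G ⧸ A i) →₀ ℚ) :=
    Finsupp.domLCongr eqv with hιdef
  have hιe : ∀ v : (G ⧸ O) →₀ ℚ,
      ιe v = Finsupp.mapDomain (fun c => (⟨0, c⟩ : Σ i : Fin 1, G ⧸ A i)) v := by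
    intro v
    rw [hιdef]
    simp only [Finsupp.domLCongr_apply, Finsupp.domCongr_apply]
    rw [Finsupp.equivMapDomain_eq_mapDomain]
    rfl
  have hcomm : ∀ (g : G) (w : (G ⧸ O) →₀ ℚ), ιe (tr g w) = tr g (ιe w) := by
    intro g w
    rw [hιe, hιe, tr_apply, tr_apply, ← Finsupp.mapDomain_comp, ← Finsupp.mapDomain_comp]
    rfl
  set d : ((Σ j, G ⧸ B j) →₀ ℚ) →ₗ[ℚ] ((Σ i : Fin 1, G ⧸ A i) →₀ ℚ) :=
    Finsupp.linearCombination ℚ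
      (fun x : Σ j, G ⧸ B j => ιe (tr (Quotient.out x.2) (vfun x.1))) with hddef
  have hd_single : ∀ (j : Fin s.card) (c : G ⧸ B j) (b : ℚ),
      d (single (⟨j, c⟩ : Σ j, G ⧸ B j) b) = b • ιe (tr (Quotient.out c) (vfun j)) := by
    intro j c b
    rw [hddef, Finsupp.linearCombination_single]
  refine ⟨1, s.card, A, B, fun i => ⟨hOo, hOc⟩, hB, d, aug _, ?_, fun g f => aug_tr g f, ?_, ?_⟩
  · -- equivariance of d
    intro g f
    induction f using Finsupp.induction_linear with
    | zero => simp
    | add f f' hf hf' =>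
      rw [map_add, map_add, hf, hf', map_add d f f']
      exact (map_add (tr g) (d f) (d f')).symm
    | single x b =>
      obtain ⟨j, c⟩ := x
      rw [sigma_tr_single, hd_single, hd_single]
      have h1 : tr (Quotient.out (g • c)) (vfun j) = tr (g * Quotient.out c) (vfun j) :=
        tr_eq_of_mk_eq (hBinv j) (mk_out_smul g c)
      rw [h1, ← tr_tr, hcomm, map_smul]
  · -- surjectivity of aug
    intro c
    exact ⟨single ⟨0, QuotientGroup.mk 1⟩ c, aug_single _ _⟩
  · -- range d = ker aug
    have hrange1 : LinearMap.range d = Submodule.span ℚ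
        (Set.range fun x : Σ j, G ⧸ B j => ιe (tr (Quotient.out x.2) (vfun x.1))) := by
      rw [hddef]
      exact Finsupp.range_linearCombination ℚ
    have himg : (Set.range fun x : Σ j, G ⧸ B j => ιe (tr (Quotient.out x.2) (vfun x.1)))
        = ⇑ιe '' transSet (G := G) s := by
      apply Set.Subset.antisymm
      · rintro - ⟨x, rfl⟩
        exact ⟨tr (Quotient.out x.2) (vfun x.1), tr_mem_transSet (vmem x.1) _, rfl⟩
      · rintro - ⟨y, ⟨g, v, hv, rfl⟩, rfl⟩
        obtain ⟨j, rfl⟩ := vsurj v hv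
        refine ⟨⟨j, QuotientGroup.mk g⟩, ?_⟩
        have : tr (Quotient.out (QuotientGroup.mk g : G ⧸ B j)) (vfun j) = tr g (vfun j) :=
          tr_eq_of_mk_eq (hBinv j) (QuotientGroup.out_eq' _)
        simp only [this]
    have haux2 : ∀ v, aug ((Σ i : Fin 1, G ⧸ A i)) (ιe v) = aug (G ⧸ O) v := by
      intro v
      rw [hιe, aug_mapDomain]
    have hker : LinearMap.ker (aug ((Σ i : Fin 1, G ⧸ A i)))
        = Submodule.map (ιe : ((G ⧸ O) →₀ ℚ) →ₗ[ℚ] ((Σ i : Fin 1, G ⧸ A i) →₀ ℚ)) (LinearMap.ker (aug (G ⧸ O))) := by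
      ext x
      simp only [Submodule.mem_map, LinearMap.mem_ker]
      constructor
      · intro hx
        refine ⟨ιe.symm x, ?_, ιe.apply_symm_apply x⟩
        rw [← haux2, ιe.apply_symm_apply, hx]
      · rintro ⟨y, hy, rfl⟩
        rw [LinearEquiv.coe_coe, haux2, hy]
    rw [hrange1, himg, ← LinearEquiv.coe_coe, Submodule.span_image, hspan, hker]

end lemC

end Aux13

/-- A t.d.l.c. group `G` is compactly generated iff for every
(equivalently, some) compact open subgroup `O` the augmentation ideal
`ker(ℚ[G/O] → ℚ)` is a finitely generated discrete `ℚ[G]`-module; equivalently,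
iff `G` is of type `FP₁` over `ℚ`. -/
theorem compactly_generated_iff_FP1 [IsTopologicalGroup G]
    [TotallyDisconnectedSpace G] [LocallyCompactSpace G] :
    (CompactlyGenerated' G ↔
      ∀ O : Subgroup G, IsOpen (O : Set G) → IsCompact (O : Set G) → AugKerFG G O) ∧
    (CompactlyGenerated' G ↔
      ∃ O : Subgroup G, IsOpen (O : Set G) ∧ IsCompact (O : Set G) ∧ AugKerFG G O) ∧
    (CompactlyGenerated' G ↔ IsTypeFPOne G) := by
  classical
  obtain ⟨O₀, hO₀o, hO₀c⟩ := Aux13.vanDantzig (G := G)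
  -- bridge between `AugKerFG` and the auxiliary formulation
  have toFG : ∀ O : Subgroup G,
      (∃ s : Finset ((G ⧸ O) →₀ ℚ), (∀ v ∈ s, Aux13.aug (G ⧸ O) v = 0) ∧
        Submodule.span ℚ (Aux13.transSet (G := G) s)
          = LinearMap.ker (Aux13.aug (G ⧸ O))) → AugKerFG G O := by
    rintro O ⟨s, h1, h2⟩
    exact ⟨s, fun v hv => LinearMap.mem_ker.mpr (h1 v hv), h2⟩
  have ofFG : ∀ O : Subgroup G, AugKerFG G O →
      (∃ s : Finset ((G ⧸ O) →₀ ℚ), (∀ v ∈ s, Aux13.aug (G ⧸ O) v = 0) ∧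
        Submodule.span ℚ (Aux13.transSet (G := G) s)
          = LinearMap.ker (Aux13.aug (G ⧸ O))) := by
    rintro O ⟨s, h1, h2⟩
    exact ⟨s, fun v hv => LinearMap.mem_ker.mp (h1 v hv), h2⟩
  have iff1 : CompactlyGenerated' G ↔
      ∀ O : Subgroup G, IsOpen (O : Set G) → IsCompact (O : Set G) → AugKerFG G O := by
    constructor
    · intro hcg O hOo _
      exact toFG O (Aux13.augKer_fg_of_cg hcg hOo)
    · intro h
      obtain ⟨s, h1, h2⟩ := ofFG O₀ (h O₀ hO₀o hO₀c)
      exact Aux13.cg_of_augKer_fg hO₀o hO₀c s h2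
  have iff2 : CompactlyGenerated' G ↔
      ∃ O : Subgroup G, IsOpen (O : Set G) ∧ IsCompact (O : Set G) ∧ AugKerFG G O := by
    constructor
    · intro hcg
      exact ⟨O₀, hO₀o, hO₀c, iff1.mp hcg O₀ hO₀o hO₀c⟩
    · rintro ⟨O, hOo, hOc, hfg⟩
      obtain ⟨s, h1, h2⟩ := ofFG O hfg
      exact Aux13.cg_of_augKer_fg hOo hOc s h2
  have iff3 : CompactlyGenerated' G ↔ IsTypeFPOne G := by
    constructor
    · intro hcg
      obtain ⟨s, h1, h2⟩ := Aux13.augKer_fg_of_cg hcg hO₀o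
      obtain ⟨n, m, A, B, hA, hB, d, e, hd, he, hesurj, hrange⟩ :=
        Aux13.FP1_of_augKer_fg hO₀o hO₀c s h2
      exact ⟨n, m, A, B, hA, hB, d, e, hd, he, hesurj, hrange⟩
    · rintro ⟨n, m, A, B, hA, hB, d, e, hd, he, hesurj, hrange⟩
      have hfg := Aux13.augKer_fg_of_FP1 hA d e hd he hesurj hrange hO₀o hO₀c
      obtain ⟨s, h1, h2⟩ := hfg
      exact Aux13.cg_of_augKer_fg hO₀o hO₀c s h2
  exact ⟨iff1, iff2, iff3⟩
end
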